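/- Let α₁, β₁, β₂, a₁, c, d be real constants with a₁³ + β₂ ≠ 0. Define u(x,t) = c·e^{−a₁x − a₁³t} and v(x,t) = d·e^{−a₁x + β₂t} − (c(a₁² + β₁)/(a₁³ + β₂))·e^{−a₁x − a₁³t}. Then u and v satisfy the system ∂u/∂t = ∂/∂x(∂²u/∂x² + α₁ v ∂v/∂x) − 2α₁a₁² v² and ∂v/∂t = ∂²u/∂x² + β₁u + β₂v for all (x,t) ∈ ℝ². -/

import Mathlib

/-- `u(x, t) = c e^{−a₁ x − a₁³ t}`. -/
noncomputable def uExact (a₁ c : ℝ) (x t : ℝ) : ℝ :=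
  c * Real.exp (-a₁ * x - a₁ ^ 3 * t)

/-- `v(x, t) = d e^{−a₁ x + β₂ t} − (c (a₁² + β₁) / (a₁³ + β₂)) e^{−a₁ x − a₁³ t}`. -/
noncomputable def vExact (a₁ β₁ β₂ c d : ℝ) (x t : ℝ) : ℝ :=
  d * Real.exp (-a₁ * x + β₂ * t)
    - c * (a₁ ^ 2 + β₁) / (a₁ ^ 3 + β₂) * Real.exp (-a₁ * x - a₁ ^ 3 * t)

lemma hda_lin (k b x : ℝ) : HasDerivAt (fun z : ℝ => k * z + b) k x := by
  simpa using ((hasDerivAt_id x).const_mul k).add_const b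

lemma hda_exp (A k b x : ℝ) :
    HasDerivAt (fun z => A * Real.exp (k * z + b)) (A * k * Real.exp (k * x + b)) x := by
  have := ((hda_lin k b x).exp).const_mul A
  convert this using 1
  · rfl
  · rfl
  ring

lemma hu_x (a₁ c t x : ℝ) :
    HasDerivAt (fun z => uExact a₁ c z t) (-a₁ * uExact a₁ c x t) x := by
  have := hda_exp c (-a₁) (-(a₁ ^ 3 * t)) x
  convert this using 1
  · funext z; unfold uExact; ring_nf
  unfold uExact; ring_nf

lemma hv_x (a₁ β₁ β₂ c d t x : ℝ) :
    HasDerivAt (fun z => vExact a₁ β₁ β₂ c d z t)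
      (-a₁ * vExact a₁ β₁ β₂ c d x t) x := by
  have h1 := hda_exp d (-a₁) (β₂ * t) x
  have h2 := hda_exp (c * (a₁ ^ 2 + β₁) / (a₁ ^ 3 + β₂)) (-a₁) (-(a₁ ^ 3 * t)) x
  have := h1.sub h2
  convert this using 1
  · rfl
  · rfl
  · funext z; rw [Pi.sub_apply]; unfold vExact; ring_nf
  unfold vExact; ring_nf

lemma hu_t (a₁ c x t : ℝ) :
    HasDerivAt (fun s => uExact a₁ c x s) (-a₁ ^ 3 * uExact a₁ c x t) t := by
  have := hda_exp c (-a₁ ^ 3) (-a₁ * x) t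
  convert this using 1
  · funext s; unfold uExact; ring_nf
  · unfold uExact; ring_nf

lemma hv_t (a₁ β₁ β₂ c d x t : ℝ) :
    HasDerivAt (fun s => vExact a₁ β₁ β₂ c d x s)
      (β₂ * (d * Real.exp (-a₁ * x + β₂ * t))
        + a₁ ^ 3 * (c * (a₁ ^ 2 + β₁) / (a₁ ^ 3 + β₂) * Real.exp (-a₁ * x - a₁ ^ 3 * t))) t := by
  have h1 := hda_exp d β₂ (-a₁ * x) t
  have h2 := hda_exp (c * (a₁ ^ 2 + β₁) / (a₁ ^ 3 + β₂)) (-a₁ ^ 3) (-a₁ * x) t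
  have := h1.sub h2
  convert this using 1
  · rfl
  · rfl
  · funext s; rw [Pi.sub_apply]; unfold vExact; ring_nf
  · ring_nf

lemma uxx (a₁ c t : ℝ) :
    iteratedDeriv 2 (fun z => uExact a₁ c z t) = fun x => a₁ ^ 2 * uExact a₁ c x t := by
  have h1 : deriv (fun z => uExact a₁ c z t) = fun x => -a₁ * uExact a₁ c x t :=
    funext fun x => (hu_x a₁ c t x).deriv
  rw [show (2 : ℕ) = 1 + 1 from rfl, iteratedDeriv_succ, iteratedDeriv_one, h1]
  funext x
  have := ((hu_x a₁ c t x).const_mul (-a₁)).deriv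
  rw [this]; ring

/-- With `a₁³ + β₂ ≠ 0`, the pair `(u, v)` given by
`u(x,t) = c e^{−a₁ x − a₁³ t}` and
`v(x,t) = d e^{−a₁ x + β₂ t} − (c (a₁² + β₁)/(a₁³ + β₂)) e^{−a₁ x − a₁³ t}` solves the
system `u_t = (u_{xx} + α₁ v v_x)_x − 2 α₁ a₁² v²`, `v_t = u_{xx} + β₁ u + β₂ v` on `ℝ²`. -/
theorem exact_solution_dissipative_system
    (α₁ β₁ β₂ a₁ c d : ℝ) (h : a₁ ^ 3 + β₂ ≠ 0) :
    (∀ x t : ℝ,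
      deriv (fun s => uExact a₁ c x s) t
        = deriv (fun y => iteratedDeriv 2 (fun z => uExact a₁ c z t) y
            + α₁ * vExact a₁ β₁ β₂ c d y t * deriv (fun z => vExact a₁ β₁ β₂ c d z t) y) x
          - 2 * α₁ * a₁ ^ 2 * (vExact a₁ β₁ β₂ c d x t) ^ 2) ∧
    (∀ x t : ℝ,
      deriv (fun s => vExact a₁ β₁ β₂ c d x s) t
        = iteratedDeriv 2 (fun z => uExact a₁ c z t) x
          + β₁ * uExact a₁ c x t + β₂ * vExact a₁ β₁ β₂ c d x t) := by
  constructor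
  · intro x t
    have hvd : deriv (fun z => vExact a₁ β₁ β₂ c d z t)
        = fun y => -a₁ * vExact a₁ β₁ β₂ c d y t :=
      funext fun y => (hv_x a₁ β₁ β₂ c d t y).deriv
    rw [(hu_t a₁ c x t).deriv]
    simp only [uxx, hvd]
    have hF : HasDerivAt
        (fun y => a₁ ^ 2 * uExact a₁ c y t
          + α₁ * vExact a₁ β₁ β₂ c d y t * (-a₁ * vExact a₁ β₁ β₂ c d y t))
        (a₁ ^ 2 * (-a₁ * uExact a₁ c x t)
          + ((α₁ * (-a₁ * vExact a₁ β₁ β₂ c d x t)) * (-a₁ * vExact a₁ β₁ β₂ c d x t)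
            + (α₁ * vExact a₁ β₁ β₂ c d x t) * (-a₁ * (-a₁ * vExact a₁ β₁ β₂ c d x t)))) x :=
      ((hu_x a₁ c t x).const_mul (a₁ ^ 2)).add
        ((((hv_x a₁ β₁ β₂ c d t x).const_mul α₁)).mul
          ((hv_x a₁ β₁ β₂ c d t x).const_mul (-a₁)))
    rw [hF.deriv]
    ring
  · intro x t
    rw [(hv_t a₁ β₁ β₂ c d x t).deriv]
    simp only [uxx]
    unfold uExact vExact
    field_simp
    ring
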